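/- Let KG be a σ-normal group ring with char(K) ≠ 2, G non-Abelian, W = {w ∈ G | σ(w) ≠ w}, and H = ⟨W⟩ Abelian. If b₁, b₂ ∈ G \ H, then b₁b₂ ∈ H; consequently H has index 2 in G. -/

import Mathlib

noncomputable def sigmaMap {K G : Type*} [CommRing K] [Group G] (σ : G → G) (f : G →* Kˣ)
    (x : MonoidAlgebra K G) : MonoidAlgebra K G :=
  Finsupp.sum x.coeff fun g a => MonoidAlgebra.single (σ g) (a * (f g : K))

theorem stmt_17 {K G : Type*} [CommRing K] [Group G] (σ : G → G) (f : G →* Kˣ)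
    (hanti : ∀ g h : G, σ (g * h) = σ h * σ g)
    (hord : ∀ g : G, σ (σ g) = g)
    (hinvol : ∀ g : G, f (g * σ g) = 1)
    (hnorm : ∀ x : MonoidAlgebra K G, x * sigmaMap σ f x = sigmaMap σ f x * x)
    (hchar : ringChar K ≠ 2)
    (hG : ∃ g h : G, g * h ≠ h * g)
    (hHab : ∀ x ∈ Subgroup.closure {w : G | σ w ≠ w},
      ∀ y ∈ Subgroup.closure {w : G | σ w ≠ w}, x * y = y * x) :
    (∀ b₁ b₂ : G, b₁ ∉ Subgroup.closure {w : G | σ w ≠ w} →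
        b₂ ∉ Subgroup.closure {w : G | σ w ≠ w} →
        b₁ * b₂ ∈ Subgroup.closure {w : G | σ w ≠ w}) ∧
    (Subgroup.closure {w : G | σ w ≠ w}).index = 2 := by
  set H := Subgroup.closure {w : G | σ w ≠ w} with hH
  -- every element outside H is fixed by σ
  have hfix : ∀ b : G, b ∉ H → σ b = b := by
    intro b hb
    by_contra hne
    exact hb (Subgroup.subset_closure hne)
  -- conjugation by an element outside H sends u ∈ H to σ u
  have hconj : ∀ b : G, b ∉ H → ∀ u : G, u ∈ H → b * u * b⁻¹ = σ u := by
    intro b hb u hu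
    have hbu : b * u ∉ H := by
      intro h
      exact hb (by simpa using H.mul_mem h (H.inv_mem hu))
    have h1 : σ (b * u) = b * u := hfix _ hbu
    have h2 : σ (b * u) = σ u * σ b := hanti b u
    have h3 : σ u * b = b * u := by
      calc σ u * b = σ u * σ b := by rw [hfix b hb]
        _ = σ (b * u) := (hanti b u).symm
        _ = b * u := h1
    group
    rw [← h3]
    group
  -- there is some w with σ w ≠ w
  have hW : ∃ w : G, σ w ≠ w := by
    by_contra h
    push_neg at h
    obtain ⟨g, g', hgg'⟩ := hG
    apply hgg'
    have := hanti g g'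
    rw [h, h, h] at this
    exact this
  obtain ⟨w, hw⟩ := hW
  have hwH : w ∈ H := Subgroup.subset_closure hw
  have hswW : σ (σ w) ≠ σ w := by rw [hord]; exact fun h => hw h.symm
  have hswH : σ w ∈ H := Subgroup.subset_closure hswW
  -- main claim
  have main : ∀ b₁ b₂ : G, b₁ ∉ H → b₂ ∉ H → b₁ * b₂ ∈ H := by
    intro b₁ b₂ hb₁ hb₂
    by_contra hc
    have e1 : (b₁ * b₂) * w * (b₁ * b₂)⁻¹ = σ w := hconj _ hc w hwH
    have e2 : b₂ * w * b₂⁻¹ = σ w := hconj _ hb₂ w hwH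
    have e3 : b₁ * σ w * b₁⁻¹ = σ (σ w) := hconj _ hb₁ (σ w) hswH
    rw [hord] at e3
    apply hw
    rw [← e1]
    have : (b₁ * b₂) * w * (b₁ * b₂)⁻¹ = b₁ * (b₂ * w * b₂⁻¹) * b₁⁻¹ := by group
    rw [this, e2, e3]
  refine ⟨main, ?_⟩
  -- H is proper
  have hne : ∃ b : G, b ∉ H := by
    by_contra h
    push_neg at h
    obtain ⟨g, g', hgg'⟩ := hG
    exact hgg' (hHab g (h g) g' (h g'))
  obtain ⟨b, hb⟩ := hne
  rw [Subgroup.index_eq_two_iff]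
  refine ⟨b, fun g => ?_⟩
  by_cases hg : g ∈ H
  · refine Or.inr ⟨hg, fun h => ?_⟩
    exact hb (by simpa using H.mul_mem (H.inv_mem hg) h)
  · exact Or.inl ⟨main g b hg hb, hg⟩
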